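/- Let n ≥ 1, let P be an n×n complex unitary matrix with P^n = 1, and let a, b, c, d ∈ ℂ be such that C = !![a, b; c, d] is unitary with b ≠ 0. Set ω := b·c − a·d and Q := (b·c·ω) • (P · (1 − (a·ω)•P)⁻¹) (the inverse exists since |a| < 1). Then Q·Qᴴ = (|b|² / |1 − (aω)^n|²) • Σ_{k=0}^{n−1} ( (aω)^k·(1 − |a|^{2(n−k)}) + (conj(aω))^{n−k}·(1 − |a|^{2k}) ) • P^k, where |·| denotes the complex absolute value. -/

import Mathlib

open Matrix

theorem stmt_10 (n : ℕ) (hn : 1 ≤ n)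
    (P : Matrix (Fin n) (Fin n) ℂ) (hP : Pᴴ * P = 1) (hPn : P ^ n = 1)
    (a b c d : ℂ)
    (hC : (!![a, b; c, d])ᴴ * !![a, b; c, d] = 1) (hb : b ≠ 0)
    (ω : ℂ) (hω : ω = b * c - a * d)
    (Q : Matrix (Fin n) (Fin n) ℂ)
    (hQ : Q = (b * c * ω) • (P * (1 - (a * ω) • P)⁻¹)) :
    Q * Qᴴ = ((‖b‖ ^ 2 / ‖1 - (a * ω) ^ n‖ ^ 2 : ℝ) : ℂ) •
      ∑ k ∈ Finset.range n,
        ((a * ω) ^ k * (1 - ((‖a‖ : ℝ) : ℂ) ^ (2 * (n - k))) +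
          ((starRingEnd ℂ) (a * ω)) ^ (n - k) * (1 - ((‖a‖ : ℝ) : ℂ) ^ (2 * k))) •
          P ^ k := by
  have hC' : !![a, b; c, d] * (!![a, b; c, d])ᴴ = 1 := mul_eq_one_comm.mp hC
  have h00 := congrFun (congrFun hC 0) 0
  have h01 := congrFun (congrFun hC 0) 1
  have h10 := congrFun (congrFun hC 1) 0
  have h11 := congrFun (congrFun hC 1) 1
  have h00' := congrFun (congrFun hC' 0) 0
  have h11' := congrFun (congrFun hC' 1) 1
  simp only [Matrix.mul_apply, Fin.sum_univ_two, Matrix.conjTranspose_apply,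
    Matrix.one_apply, Matrix.cons_val', Matrix.cons_val_zero, Matrix.cons_val_one,
    Matrix.head_cons, Matrix.head_fin_const, Matrix.empty_val', Matrix.cons_val_fin_one,
    Matrix.of_apply, if_true, if_false, Fin.zero_eq_one_iff, Fin.one_eq_zero_iff,
    Ne, OfNat.ofNat_ne_one, not_false_iff, one_ne_zero, if_neg, RCLike.star_def,
    ite_true, ite_false, reduceIte] at h00 h01 h10 h11 h00' h11'
  set z := a * ω with hzdef
  -- ω is unimodular
  have hωω : ω * (starRingEnd ℂ) ω = 1 := by
    rw [hω]
    simp only [map_sub, _root_.map_mul]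
    linear_combination ((starRingEnd ℂ) b * b + (starRingEnd ℂ) d * d) * h00 + h11 -
      ((starRingEnd ℂ) b * a + (starRingEnd ℂ) d * c) * h01
  set α := a * (starRingEnd ℂ) a with hαdef
  have hzz : z * (starRingEnd ℂ) z = α := by
    simp only [hzdef, _root_.map_mul, hαdef]
    linear_combination a * (starRingEnd ℂ) a * hωω
  have hbb : b * (starRingEnd ℂ) b = 1 - α := by linear_combination h00'
  have hcb : c * (starRingEnd ℂ) c = b * (starRingEnd ℂ) b := by
    linear_combination h11' - h11
  have hbcω : (b * c * ω) * (starRingEnd ℂ) (b * c * ω) = (b * (starRingEnd ℂ) b) ^ 2 := by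
    simp only [_root_.map_mul]
    linear_combination (b * (starRingEnd ℂ) b) * (c * (starRingEnd ℂ) c) * hωω +
      (b * (starRingEnd ℂ) b) * hcb
  -- |a| < 1
  have hnb : 0 < Complex.normSq b := Complex.normSq_pos.mpr hb
  have hnsa : Complex.normSq a = 1 - Complex.normSq b := by
    have h2 : ((Complex.normSq a : ℂ)) + ((Complex.normSq b : ℂ)) = 1 := by
      rw [← Complex.mul_conj, ← Complex.mul_conj]; linear_combination hbb
    have h3 : (Complex.normSq a + Complex.normSq b : ℝ) = 1 := by exact_mod_cast h2
    linarith
  have habsω : ‖ω‖ = 1 := by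
    have h1 : ω * (starRingEnd ℂ) ω = ((Complex.normSq ω : ℝ) : ℂ) := Complex.mul_conj ω
    rw [hωω] at h1
    have h2 : Complex.normSq ω = 1 := by exact_mod_cast h1.symm
    have := Complex.sq_norm ω
    nlinarith [norm_nonneg ω]
  have haa : ‖a‖ < 1 := by
    have := Complex.sq_norm a
    nlinarith [norm_nonneg a]
  have hz1 : ‖z‖ < 1 := by
    rw [hzdef, norm_mul, habsω, mul_one]; exact haa
  have hzn1 : ‖z ^ n‖ < 1 := by
    rw [norm_pow]; exact pow_lt_one₀ (norm_nonneg z) hz1 (by omega)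
  have hu : (1 : ℂ) - z ^ n ≠ 0 := by
    intro h
    rw [sub_eq_zero] at h
    rw [← h] at hzn1
    simp at hzn1
  set u := (1 : ℂ) - z ^ n with hudef
  have hu' : (starRingEnd ℂ) u ≠ 0 := by simpa using hu
  -- geometric series inverse
  set S := ∑ i ∈ Finset.range n, (z • P) ^ i with hSdef
  have hzPn : (z • P) ^ n = z ^ n • 1 := by rw [smul_pow, hPn]
  have hgeo : (1 - z • P) * S = u • 1 := by
    have h1 : (z • P - 1) * S = (z • P) ^ n - 1 := mul_geom_sum _ _
    have h2 : (1 - z • P) * S = -((z • P - 1) * S) := by rw [← neg_sub, neg_mul]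
    rw [h2, h1, hzPn, hudef, sub_smul, one_smul]
    abel
  have hinv : (1 - z • P)⁻¹ = u⁻¹ • S := by
    apply Matrix.inv_eq_right_inv
    rw [mul_smul_comm, hgeo, smul_smul, inv_mul_cancel₀ hu, one_smul]
  have hQ2 : Q = (b * c * ω * u⁻¹) • (P * S) := by
    rw [hQ, hinv, mul_smul_comm, smul_smul]
  -- conjTranspose facts
  have hP' : P * Pᴴ = 1 := mul_eq_one_comm.mp hP
  have hn1 : n - 1 + 1 = n := by omega
  have hPH : Pᴴ = P ^ (n - 1) := by
    calc Pᴴ = Pᴴ * P ^ n := by rw [hPn, mul_one]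
    _ = Pᴴ * (P * P ^ (n - 1)) := by rw [← pow_succ', hn1]
    _ = (Pᴴ * P) * P ^ (n - 1) := by rw [mul_assoc]
    _ = P ^ (n - 1) := by rw [hP, one_mul]
  set T := ∑ k ∈ Finset.range n, ((starRingEnd ℂ) z • P ^ (n - 1)) ^ k with hTdef
  have hSH : Sᴴ = T := by
    rw [hSdef, hTdef, Matrix.conjTranspose_sum]
    refine Finset.sum_congr rfl fun i _ => ?_
    rw [Matrix.conjTranspose_pow, Matrix.conjTranspose_smul, hPH, starRingEnd_apply]
  have hQH : Qᴴ = (starRingEnd ℂ) (b * c * ω * u⁻¹) • (T * Pᴴ) := by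
    rw [hQ2, Matrix.conjTranspose_smul, Matrix.conjTranspose_mul, hSH, starRingEnd_apply]
  -- commutation
  have cPS : Commute P S := by
    apply Commute.sum_right
    intro i _
    exact ((Commute.refl P).smul_right z).pow_right i
  have cPT : Commute P T := by
    apply Commute.sum_right
    intro i _
    exact ((((Commute.refl P).pow_right (n - 1))).smul_right ((starRingEnd ℂ) z)).pow_right i
  have hQQ : Q * Qᴴ =
      ((b * c * ω * u⁻¹) * (starRingEnd ℂ) (b * c * ω * u⁻¹)) • (S * T) := by
    rw [hQH, hQ2, Matrix.smul_mul, Matrix.mul_smul, smul_smul]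
    congr 1
    calc P * S * (T * Pᴴ) = P * (S * T) * Pᴴ := by
          rw [mul_assoc, mul_assoc, mul_assoc]
    _ = (S * T) * P * Pᴴ := by rw [(cPS.mul_right cPT).eq]
    _ = (S * T) * (P * Pᴴ) := by rw [mul_assoc]
    _ = S * T := by rw [hP', mul_one]
  -- powers of P mod n
  have hPmod : ∀ m : ℕ, P ^ m = P ^ (m % n) := by
    intro m
    conv_lhs => rw [← Nat.div_add_mod m n]
    rw [pow_add, pow_mul, hPn, one_pow, one_mul]
  -- compute S * T as a sum over residues
  have hST : S * T = ∑ m ∈ Finset.range n,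
      (∑ k ∈ Finset.range n, z ^ ((m + k) % n) * ((starRingEnd ℂ) z) ^ k) • P ^ m := by
    rw [hSdef, hTdef, Finset.sum_mul_sum, Finset.sum_comm]
    have step1 : ∀ k ∈ Finset.range n,
        (∑ j ∈ Finset.range n, (z • P) ^ j * ((starRingEnd ℂ) z • P ^ (n - 1)) ^ k)
        = ∑ m ∈ Finset.range n, (z ^ ((m + k) % n) * ((starRingEnd ℂ) z) ^ k) • P ^ m := by
      intro k hk
      rw [Finset.mem_range] at hk
      have hterm : ∀ j, (z • P) ^ j * ((starRingEnd ℂ) z • P ^ (n - 1)) ^ k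
          = (z ^ j * ((starRingEnd ℂ) z) ^ k) • P ^ ((j + (n - 1) * k) % n) := by
        intro j
        rw [smul_pow, smul_pow, Matrix.smul_mul, Matrix.mul_smul, smul_smul,
          ← pow_mul, ← pow_add, ← hPmod]
      simp only [hterm]
      have key1 : ∀ j, j < n → ((j + (n - 1) * k) % n + k) % n = j := by
        intro j hj
        have e1 : j + (n - 1) * k + k = j + n * k := by
          have e : n - 1 + 1 = n := by omega
          calc j + (n - 1) * k + k = j + (n - 1 + 1) * k := by ring
          _ = j + n * k := by rw [e]
        rw [Nat.mod_add_mod, e1, Nat.add_mul_mod_self_left, Nat.mod_eq_of_lt hj]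
      have key2 : ∀ m, m < n → ((m + k) % n + (n - 1) * k) % n = m := by
        intro m hm
        have e1 : m + k + (n - 1) * k = m + n * k := by
          have e : n - 1 + 1 = n := by omega
          calc m + k + (n - 1) * k = m + (n - 1 + 1) * k := by ring
          _ = m + n * k := by rw [e]
        rw [Nat.mod_add_mod, e1, Nat.add_mul_mod_self_left, Nat.mod_eq_of_lt hm]
      refine Finset.sum_nbij' (fun j => (j + (n - 1) * k) % n) (fun m => (m + k) % n)
        ?_ ?_ ?_ ?_ ?_
      · intro j hj
        exact Finset.mem_range.mpr (Nat.mod_lt _ (by omega))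
      · intro m hm
        exact Finset.mem_range.mpr (Nat.mod_lt _ (by omega))
      · intro j hj
        rw [Finset.mem_range] at hj
        exact key1 j hj
      · intro m hm
        rw [Finset.mem_range] at hm
        exact key2 m hm
      · intro j hj
        rw [Finset.mem_range] at hj
        rw [key1 j hj]
    rw [Finset.sum_congr rfl step1, Finset.sum_comm]
    refine Finset.sum_congr rfl fun m _ => ?_
    rw [← Finset.sum_smul]
  -- geometric sums in α
  set G : ℕ → ℂ := fun N => ∑ i ∈ Finset.range N, α ^ i with hGdef
  have hgeom : ∀ N, (1 - α) * G N = 1 - α ^ N := by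
    intro N
    have h := geom_sum_mul α N
    simp only [hGdef]
    linear_combination -h
  -- cast facts
  have hca : ((‖a‖ : ℝ) : ℂ) ^ 2 = α := by
    rw [← Complex.ofReal_pow, Complex.sq_norm, hαdef, Complex.mul_conj]
  have hcb2 : ((‖b‖ ^ 2 : ℝ) : ℂ) = b * (starRingEnd ℂ) b := by
    rw [Complex.sq_norm, Complex.mul_conj]
  have hcu : ((‖u‖ ^ 2 : ℝ) : ℂ) = u * (starRingEnd ℂ) u := by
    rw [Complex.sq_norm, Complex.mul_conj]
  have hV : (b * c * ω * u⁻¹) * (starRingEnd ℂ) (b * c * ω * u⁻¹)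
      = (1 - α) ^ 2 * (u * (starRingEnd ℂ) u)⁻¹ := by
    simp only [_root_.map_mul, map_inv₀]
    calc b * c * ω * u⁻¹ * ((starRingEnd ℂ) b * (starRingEnd ℂ) c * (starRingEnd ℂ) ω *
          ((starRingEnd ℂ) u)⁻¹)
        = (b * c * ω * ((starRingEnd ℂ) b * (starRingEnd ℂ) c * (starRingEnd ℂ) ω)) *
          (u⁻¹ * ((starRingEnd ℂ) u)⁻¹) := by ring
    _ = (1 - α) ^ 2 * (u * (starRingEnd ℂ) u)⁻¹ := by
        rw [← mul_inv]
        congr 1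
        have : b * c * ω * ((starRingEnd ℂ) b * (starRingEnd ℂ) c * (starRingEnd ℂ) ω)
            = b * c * ω * (starRingEnd ℂ) (b * c * ω) := by
          simp only [_root_.map_mul]
        rw [this, hbcω, hbb]
  -- final assembly
  rw [hQQ, hST, Finset.smul_sum, Finset.smul_sum]
  refine Finset.sum_congr rfl fun m hm => ?_
  rw [Finset.mem_range] at hm
  rw [smul_smul, smul_smul]
  congr 1
  -- split the inner sum
  have hsum := Finset.sum_range_add
    (fun k => z ^ ((m + k) % n) * ((starRingEnd ℂ) z) ^ k) (n - m) m
  rw [show n - m + m = n from by omega] at hsum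
  have hfirst : ∑ k ∈ Finset.range (n - m),
      z ^ ((m + k) % n) * ((starRingEnd ℂ) z) ^ k = z ^ m * G (n - m) := by
    rw [hGdef, Finset.mul_sum]
    refine Finset.sum_congr rfl fun k hk => ?_
    rw [Finset.mem_range] at hk
    rw [Nat.mod_eq_of_lt (by omega), pow_add, mul_assoc, ← mul_pow, hzz]
  have hsecond : ∑ i ∈ Finset.range m,
      z ^ ((m + (n - m + i)) % n) * ((starRingEnd ℂ) z) ^ (n - m + i)
      = ((starRingEnd ℂ) z) ^ (n - m) * G m := by
    rw [hGdef, Finset.mul_sum]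
    refine Finset.sum_congr rfl fun i hi => ?_
    rw [Finset.mem_range] at hi
    rw [show m + (n - m + i) = n + i from by omega, Nat.add_mod_left,
      Nat.mod_eq_of_lt (by omega), pow_add]
    calc z ^ i * (((starRingEnd ℂ) z) ^ (n - m) * ((starRingEnd ℂ) z) ^ i)
        = ((starRingEnd ℂ) z) ^ (n - m) * (z * (starRingEnd ℂ) z) ^ i := by
          rw [mul_pow]; ring
    _ = ((starRingEnd ℂ) z) ^ (n - m) * α ^ i := by rw [hzz]
  rw [hsum, hfirst, hsecond, hV]
  rw [Complex.ofReal_div, hcb2, hcu, hbb]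
  rw [pow_mul, pow_mul, hca, ← hgeom, ← hgeom]
  ring
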